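/- Let ρ_A be a density matrix on ℂ^m and ρ_B a density matrix on ℂ^n, and suppose neither ρ_A nor ρ_B is pure. Then there exists a density matrix σ on ℂ^m ⊗ ℂ^n with tr_B σ = ρ_A, tr_A σ = ρ_B, and σ ≠ ρ_A ⊗ ρ_B. (Thus any pair of non-pure marginals admits a non-trivially correlated joint state, so the quantum-house effect can be achieved with the product state ρ_A ⊗ ρ_B.) -/

import Mathlib

open Matrix Kronecker BigOperators ComplexOrder

noncomputable section

/-- Partial trace over the second factor. -/
def trB {m n : ℕ} (ρ : Matrix (Fin m × Fin n) (Fin m × Fin n) ℂ) :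
    Matrix (Fin m) (Fin m) ℂ :=
  fun i j => ∑ k : Fin n, ρ (i, k) (j, k)

/-- Partial trace over the first factor. -/
def trA {m n : ℕ} (ρ : Matrix (Fin m × Fin n) (Fin m × Fin n) ℂ) :
    Matrix (Fin n) (Fin n) ℂ :=
  fun k l => ∑ i : Fin m, ρ (i, k) (i, l)

/-- A density matrix: positive semidefinite with trace 1. -/
def IsDensityMatrix {d : Type*} [Fintype d] [DecidableEq d] (ρ : Matrix d d ℂ) : Prop :=
  ρ.PosSemidef ∧ ρ.trace = 1

/-- An orthonormal basis of ℂ^m, given as a family of m vectors. -/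
def IsONB {m : ℕ} (e : Fin m → Fin m → ℂ) : Prop :=
  ∀ i j, star (e i) ⬝ᵥ e j = if i = j then 1 else 0

/-- The rank-one matrix v v*, with entries v j * conj (v k). -/
def proj {m : ℕ} (v : Fin m → ℂ) : Matrix (Fin m) (Fin m) ℂ :=
  vecMulVec v (star v)

/-- A classical-quantum (zero-discord) state: ρ = ∑ i (eᵢ eᵢ*) ⊗ σᵢ for an
orthonormal basis e of ℂ^m and positive semidefinite σᵢ. -/
def ClassicalQuantum {m n : ℕ} (ρ : Matrix (Fin m × Fin n) (Fin m × Fin n) ℂ) : Prop :=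
  ∃ e : Fin m → Fin m → ℂ, IsONB e ∧
    ∃ σ : Fin m → Matrix (Fin n) (Fin n) ℂ,
      (∀ i, (σ i).PosSemidef) ∧ ρ = ∑ i, proj (e i) ⊗ₖ σ i

/-- A pure state: ρ = ψψ* for a unit vector ψ. -/
def IsPure {d : ℕ} (ρ : Matrix (Fin d) (Fin d) ℂ) : Prop :=
  ∃ ψ : Fin d → ℂ, star ψ ⬝ᵥ ψ = 1 ∧ ρ = vecMulVec ψ (star ψ)

/-! ### Auxiliary lemmas -/

lemma dot_vmv {d : Type*} [Fintype d] (w x y : d → ℂ) :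
    star x ⬝ᵥ ((vecMulVec w (star w)) *ᵥ y) = (star x ⬝ᵥ w) * (star w ⬝ᵥ y) := by
  simp only [vecMulVec, dotProduct, mulVec, Matrix.of_apply, Pi.star_apply]
  rw [Finset.sum_mul_sum]
  exact Finset.sum_congr rfl fun i _ => by
    rw [Finset.mul_sum]
    exact Finset.sum_congr rfl fun j _ => by ring

lemma vmv_posSemidef {d : Type*} [Fintype d] [DecidableEq d] (v : d → ℂ) :
    (vecMulVec v (star v)).PosSemidef := by
  refine Matrix.PosSemidef.of_dotProduct_mulVec_nonneg ?_ ?_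
  · ext i j
    simp [vecMulVec_apply, conjTranspose_apply, mul_comm]
  · intro x
    rw [dot_vmv]
    have h : star x ⬝ᵥ v = star (star v ⬝ᵥ x) := by
      simp [dotProduct, mul_comm]
    rw [h]
    exact star_mul_self_nonneg _

lemma dot_proj {d : ℕ} (w x y : Fin d → ℂ) :
    star x ⬝ᵥ ((proj w) *ᵥ y) = (star x ⬝ᵥ w) * (star w ⬝ᵥ y) := dot_vmv w x y

lemma proj_posSemidef {d : ℕ} (v : Fin d → ℂ) : (proj v).PosSemidef := vmv_posSemidef v

lemma proj_kron {m n : ℕ} (x : Fin m → ℂ) (y : Fin n → ℂ) :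
    proj x ⊗ₖ proj y = vecMulVec (fun p : Fin m × Fin n => x p.1 * y p.2)
      (star (fun p : Fin m × Fin n => x p.1 * y p.2)) := by
  ext ⟨i, k⟩ ⟨j, l⟩
  simp [proj, vecMulVec_apply, kroneckerMap_apply]
  ring

lemma posSemidef_sum {d : Type*} [Fintype d] [DecidableEq d] {ι : Type*} (s : Finset ι)
    (f : ι → Matrix d d ℂ) (h : ∀ i ∈ s, (f i).PosSemidef) : (∑ i ∈ s, f i).PosSemidef := by
  induction s using Finset.cons_induction_on with
  | empty => simpa using Matrix.PosSemidef.zero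
  | cons _ _ hne ih =>
    rw [Finset.sum_cons]
    exact ((h _ (Finset.mem_cons_self _ _)).add
      (ih fun i hi => h i (Finset.mem_cons_of_mem hi)))

lemma smul_posSemidef {d : Type*} [Fintype d] [DecidableEq d] {r : ℝ} (hr : 0 ≤ r)
    {M : Matrix d d ℂ} (hM : M.PosSemidef) : ((r : ℂ) • M).PosSemidef := by
  refine Matrix.PosSemidef.of_dotProduct_mulVec_nonneg ?_ ?_
  · ext i j
    simp [conjTranspose_apply, hM.1.apply i j, ← hM.1.apply j i]
  · intro x
    rw [smul_mulVec, dotProduct_smul, smul_eq_mul]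
    exact mul_nonneg (by exact_mod_cast hr) (hM.dotProduct_mulVec_nonneg x)

lemma spectral_sum {d : ℕ} {A : Matrix (Fin d) (Fin d) ℂ} (hA : A.IsHermitian) :
    A = ∑ i, (hA.eigenvalues i : ℂ) • proj ⇑(hA.eigenvectorBasis i) := by
  conv_lhs => rw [hA.spectral_theorem, Unitary.conjStarAlgAut_apply]
  ext i j
  rw [Matrix.sum_apply]
  simp only [Matrix.mul_apply, Matrix.diagonal_apply, Function.comp_apply, Matrix.star_apply,
    Matrix.smul_apply, proj, vecMulVec_apply, Pi.star_apply,
    IsHermitian.eigenvectorUnitary_apply, smul_eq_mul]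
  refine Finset.sum_congr rfl fun k _ => ?_
  rw [Finset.sum_eq_single k (by intro b _ hb; simp [hb]) (by simp)]
  simp
  ring

lemma eigen_onb {d : ℕ} {A : Matrix (Fin d) (Fin d) ℂ} (hA : A.IsHermitian) (i j : Fin d) :
    star ⇑(hA.eigenvectorBasis i) ⬝ᵥ ⇑(hA.eigenvectorBasis j) = if i = j then 1 else 0 := by
  have := orthonormal_iff_ite.mp hA.eigenvectorBasis.orthonormal i j
  rwa [EuclideanSpace.inner_eq_star_dotProduct, dotProduct_comm] at this

lemma trace_proj {d : ℕ} (v : Fin d → ℂ) : (proj v).trace = star v ⬝ᵥ v := by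
  simp [proj, Matrix.trace, Matrix.diag, vecMulVec_apply, dotProduct, mul_comm]

lemma sum_kron_sum {m n : ℕ} (M : Fin m → Matrix (Fin m) (Fin m) ℂ)
    (N : Fin n → Matrix (Fin n) (Fin n) ℂ) :
    (∑ i, M i) ⊗ₖ (∑ j, N j) = ∑ i, ∑ j, M i ⊗ₖ N j := by
  ext ⟨i, k⟩ ⟨j, l⟩
  simp only [kroneckerMap_apply, Matrix.sum_apply, Finset.sum_mul_sum]

lemma sum_eigen_one {d : ℕ} {A : Matrix (Fin d) (Fin d) ℂ} (hA : IsDensityMatrix A) :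
    ∑ i, hA.1.1.eigenvalues i = 1 := by
  have h1 : A.trace = ∑ i, (hA.1.1.eigenvalues i : ℂ) := by
    conv_lhs => rw [spectral_sum hA.1.1]
    rw [Matrix.trace_sum]
    refine Finset.sum_congr rfl fun i _ => ?_
    rw [Matrix.trace_smul, trace_proj, eigen_onb hA.1.1 i i, if_pos rfl, smul_eq_mul, mul_one]
  have h2 : ((∑ i, hA.1.1.eigenvalues i : ℝ) : ℂ) = 1 := by
    push_cast
    rw [← h1, hA.2]
  exact_mod_cast h2

lemma exists_two_pos {d : ℕ} {ρ : Matrix (Fin d) (Fin d) ℂ} (h : IsDensityMatrix ρ)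
    (hp : ¬ IsPure ρ) :
    ∃ i j : Fin d, i ≠ j ∧ 0 < h.1.1.eigenvalues i ∧ 0 < h.1.1.eigenvalues j := by
  set a := h.1.1.eigenvalues with ha
  have hnn : ∀ i, 0 ≤ a i := h.1.eigenvalues_nonneg
  have hsum : ∑ i, a i = 1 := sum_eigen_one h
  have h0 : ∃ i, 0 < a i := by
    by_contra hc
    push_neg at hc
    have : ∀ i, a i = 0 := fun i => le_antisymm (hc i) (hnn i)
    simp [this] at hsum
  obtain ⟨i₀, hi₀⟩ := h0
  by_contra hc
  push_neg at hc
  have hz : ∀ j, j ≠ i₀ → a j = 0 := by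
    intro j hj
    exact le_antisymm (hc i₀ j (Ne.symm hj) hi₀) (hnn j)
  have h1 : a i₀ = 1 := by
    rw [← hsum, Finset.sum_eq_single i₀ (fun b _ hb => hz b hb) (by simp)]
  apply hp
  refine ⟨⇑(h.1.1.eigenvectorBasis i₀), by rw [eigen_onb h.1.1 i₀ i₀, if_pos rfl], ?_⟩
  refine (spectral_sum h.1.1).trans ?_
  rw [Finset.sum_eq_single i₀ (fun b _ hb => by
    rw [show h.1.1.eigenvalues b = a b from rfl, hz b hb]; simp) (by simp)]
  rw [show h.1.1.eigenvalues i₀ = a i₀ from rfl, h1]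
  simp [proj]

theorem stmt2 {m n : ℕ} (ρA : Matrix (Fin m) (Fin m) ℂ) (ρB : Matrix (Fin n) (Fin n) ℂ)
    (hA : IsDensityMatrix ρA) (hB : IsDensityMatrix ρB)
    (hApure : ¬ IsPure ρA) (hBpure : ¬ IsPure ρB) :
    ∃ σ : Matrix (Fin m × Fin n) (Fin m × Fin n) ℂ,
      IsDensityMatrix σ ∧ trB σ = ρA ∧ trA σ = ρB ∧ σ ≠ ρA ⊗ₖ ρB := by
  classical
  obtain ⟨i₀, i₁, hine, hai₀, hai₁⟩ := exists_two_pos hA hApure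
  obtain ⟨j₀, j₁, hjne, hbj₀, hbj₁⟩ := exists_two_pos hB hBpure
  set a : Fin m → ℝ := hA.1.1.eigenvalues with ha
  set b : Fin n → ℝ := hB.1.1.eigenvalues with hb
  set u : Fin m → Fin m → ℂ := fun i => ⇑(hA.1.1.eigenvectorBasis i) with hu
  set v : Fin n → Fin n → ℂ := fun j => ⇑(hB.1.1.eigenvectorBasis j) with hv
  have decompA : ρA = ∑ i, (a i : ℂ) • proj (u i) := spectral_sum hA.1.1
  have decompB : ρB = ∑ j, (b j : ℂ) • proj (v j) := spectral_sum hB.1.1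
  have onbA : ∀ i j, star (u i) ⬝ᵥ u j = if i = j then 1 else 0 := fun i j =>
    eigen_onb hA.1.1 i j
  have onbB : ∀ i j, star (v i) ⬝ᵥ v j = if i = j then 1 else 0 := fun i j =>
    eigen_onb hB.1.1 i j
  set ε : ℝ := min (a i₀ * b j₁) (a i₁ * b j₀) with hεdef
  have hε : 0 < ε := lt_min (mul_pos hai₀ hbj₁) (mul_pos hai₁ hbj₀)
  set χA : Fin m → ℝ := fun i => (if i₀ = i then 1 else 0) - (if i₁ = i then 1 else 0)
    with hχAdef
  set χB : Fin n → ℝ := fun j => (if j₀ = j then 1 else 0) - (if j₁ = j then 1 else 0)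
    with hχBdef
  have hχA0 : χA i₀ = 1 := by simp [hχAdef, (Ne.symm hine : i₁ ≠ i₀)]
  have hχA1 : χA i₁ = -1 := by simp [hχAdef, hine]
  have hχAo : ∀ i, i ≠ i₀ → i ≠ i₁ → χA i = 0 := fun i h1 h2 => by
    simp [hχAdef, Ne.symm h1, Ne.symm h2]
  have hχB0 : χB j₀ = 1 := by simp [hχBdef, (Ne.symm hjne : j₁ ≠ j₀)]
  have hχB1 : χB j₁ = -1 := by simp [hχBdef, hjne]
  have hχBo : ∀ j, j ≠ j₀ → j ≠ j₁ → χB j = 0 := fun j h1 h2 => by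
    simp [hχBdef, Ne.symm h1, Ne.symm h2]
  set c : Fin m → Fin n → ℝ := fun i j => a i * b j + ε * (χA i * χB j) with hcdef
  have hεle1 : ε ≤ a i₀ * b j₁ := min_le_left _ _
  have hεle2 : ε ≤ a i₁ * b j₀ := min_le_right _ _
  have hcnn : ∀ i j, 0 ≤ c i j := by
    intro i j
    have hab : 0 ≤ a i * b j := mul_nonneg (hA.1.eigenvalues_nonneg i) (hB.1.eigenvalues_nonneg j)
    show 0 ≤ a i * b j + ε * (χA i * χB j)
    rcases eq_or_ne i i₀ with hi0 | hi0
    · rcases eq_or_ne j j₀ with hj0 | hj0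
      · rw [hi0, hj0, hχA0, hχB0]
        nlinarith [hε.le, mul_nonneg (hA.1.eigenvalues_nonneg i₀) (hB.1.eigenvalues_nonneg j₀)]
      · rcases eq_or_ne j j₁ with hj1 | hj1
        · rw [hi0, hj1, hχA0, hχB1]
          nlinarith [hεle1]
        · rw [hχBo j hj0 hj1]
          nlinarith [hab]
    · rcases eq_or_ne i i₁ with hi1 | hi1
      · rcases eq_or_ne j j₀ with hj0 | hj0
        · rw [hi1, hj0, hχA1, hχB0]
          nlinarith [hεle2]
        · rcases eq_or_ne j j₁ with hj1 | hj1
          · rw [hi1, hj1, hχA1, hχB1]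
            nlinarith [hε.le, mul_nonneg (hA.1.eigenvalues_nonneg i₁) (hB.1.eigenvalues_nonneg j₁)]
          · rw [hχBo j hj0 hj1]
            nlinarith [hab]
      · rw [hχAo i hi0 hi1]
        nlinarith [hab]
  set DA : Matrix (Fin m) (Fin m) ℂ := proj (u i₀) - proj (u i₁) with hDAdef
  set DB : Matrix (Fin n) (Fin n) ℂ := proj (v j₀) - proj (v j₁) with hDBdef
  set σ : Matrix (Fin m × Fin n) (Fin m × Fin n) ℂ :=
    ρA ⊗ₖ ρB + (ε : ℂ) • (DA ⊗ₖ DB) with hσdef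
  have sumχA : ∑ i, (χA i : ℂ) • proj (u i) = DA := by
    rw [hDAdef]
    have : ∀ i, (χA i : ℂ) • proj (u i)
        = (if i₀ = i then proj (u i) else 0) - (if i₁ = i then proj (u i) else 0) := by
      intro i
      have hx : χA i = (if i₀ = i then (1 : ℝ) else 0) - (if i₁ = i then 1 else 0) := by
        rw [hχAdef]
      rw [hx]
      split_ifs <;> push_cast <;> simp
    rw [Finset.sum_congr rfl fun i _ => this i, Finset.sum_sub_distrib,
      Finset.sum_ite_eq, Finset.sum_ite_eq]
    simp
  have sumχB : ∑ j, (χB j : ℂ) • proj (v j) = DB := by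
    rw [hDBdef]
    have : ∀ j, (χB j : ℂ) • proj (v j)
        = (if j₀ = j then proj (v j) else 0) - (if j₁ = j then proj (v j) else 0) := by
      intro j
      have hx : χB j = (if j₀ = j then (1 : ℝ) else 0) - (if j₁ = j then 1 else 0) := by
        rw [hχBdef]
      rw [hx]
      split_ifs <;> push_cast <;> simp
    rw [Finset.sum_congr rfl fun j _ => this j, Finset.sum_sub_distrib,
      Finset.sum_ite_eq, Finset.sum_ite_eq]
    simp
  have key : σ = ∑ i, ∑ j, (c i j : ℂ) • (proj (u i) ⊗ₖ proj (v j)) := by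
    have e1 : ρA ⊗ₖ ρB = ∑ i, ∑ j, ((a i : ℂ) * (b j : ℂ)) • (proj (u i) ⊗ₖ proj (v j)) := by
      rw [decompA, decompB, sum_kron_sum]
      simp_rw [smul_kronecker, kronecker_smul, smul_smul]
    have e2 : DA ⊗ₖ DB = ∑ i, ∑ j, ((χA i : ℂ) * (χB j : ℂ)) • (proj (u i) ⊗ₖ proj (v j)) := by
      rw [← sumχA, ← sumχB, sum_kron_sum]
      simp_rw [smul_kronecker, kronecker_smul, smul_smul]
    rw [hσdef, e1, e2, Finset.smul_sum]
    simp_rw [Finset.smul_sum, smul_smul]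
    rw [← Finset.sum_add_distrib]
    refine Finset.sum_congr rfl fun i _ => ?_
    rw [← Finset.sum_add_distrib]
    refine Finset.sum_congr rfl fun j _ => ?_
    rw [← add_smul]
    congr 1
    rw [hcdef]
    push_cast
    ring
  have hσpsd : σ.PosSemidef := by
    rw [key]
    refine posSemidef_sum _ _ fun i _ => posSemidef_sum _ _ fun j _ => ?_
    rw [proj_kron]
    exact smul_posSemidef (hcnn i j) (vmv_posSemidef _)
  have htru : ∀ i, (proj (u i)).trace = 1 := fun i => by
    rw [trace_proj, onbA i i, if_pos rfl]
  have htrv : ∀ j, (proj (v j)).trace = 1 := fun j => by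
    rw [trace_proj, onbB j j, if_pos rfl]
  have htrDA : DA.trace = 0 := by rw [hDAdef, trace_sub, htru, htru, sub_self]
  have htrDB : DB.trace = 0 := by rw [hDBdef, trace_sub, htrv, htrv, sub_self]
  have hσtr : σ.trace = 1 := by
    rw [hσdef, trace_add, trace_smul, trace_kronecker, trace_kronecker, hA.2, hB.2,
      htrDA, htrDB]
    simp
  have hB1 : ∑ k, ρB k k = 1 := by
    have := hB.2
    simpa [Matrix.trace, Matrix.diag] using this
  have hA1 : ∑ i, ρA i i = 1 := by
    have := hA.2
    simpa [Matrix.trace, Matrix.diag] using this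
  have hDB0 : ∑ k, DB k k = 0 := by
    have := htrDB
    simpa [Matrix.trace, Matrix.diag] using this
  have hDA0sum : ∑ i, DA i i = 0 := by
    have := htrDA
    simpa [Matrix.trace, Matrix.diag] using this
  have hentry : ∀ i k j l, σ (i, k) (j, l) = ρA i j * ρB k l + (ε : ℂ) * (DA i j * DB k l) := by
    intro i k j l
    rw [hσdef]
    simp [kroneckerMap_apply]
  have htrBσ : trB σ = ρA := by
    funext i j
    show ∑ k, σ (i, k) (j, k) = ρA i j
    rw [Finset.sum_congr rfl fun k _ => hentry i k j k, Finset.sum_add_distrib,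
      ← Finset.mul_sum, hB1, mul_one, ← Finset.mul_sum, ← Finset.mul_sum, hDB0]
    simp
  have htrAσ : trA σ = ρB := by
    funext k l
    show ∑ i, σ (i, k) (i, l) = ρB k l
    have : ∀ i : Fin m, σ (i, k) (i, l) = ρA i i * ρB k l + (ε : ℂ) * (DA i i * DB k l) :=
      fun i => hentry i k i l
    rw [Finset.sum_congr rfl fun i _ => this i, Finset.sum_add_distrib, ← Finset.sum_mul,
      hA1, one_mul, ← Finset.mul_sum]
    have : ∑ i, DA i i * DB k l = (∑ i, DA i i) * DB k l := by rw [Finset.sum_mul]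
    rw [this, hDA0sum]
    simp
  have hqA : star (u i₀) ⬝ᵥ (DA *ᵥ u i₀) = 1 := by
    rw [hDAdef, sub_mulVec, dotProduct_sub, dot_proj, dot_proj, onbA i₀ i₀, onbA i₀ i₁,
      onbA i₁ i₀]
    simp [hine, Ne.symm hine]
  have hqB : star (v j₀) ⬝ᵥ (DB *ᵥ v j₀) = 1 := by
    rw [hDBdef, sub_mulVec, dotProduct_sub, dot_proj, dot_proj, onbB j₀ j₀, onbB j₀ j₁,
      onbB j₁ j₀]
    simp [hjne, Ne.symm hjne]
  have hneq : σ ≠ ρA ⊗ₖ ρB := by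
    intro hcontra
    have h' : ρA ⊗ₖ ρB + (ε : ℂ) • (DA ⊗ₖ DB) = ρA ⊗ₖ ρB := hσdef.symm.trans hcontra
    have hzero : (ε : ℂ) • (DA ⊗ₖ DB) = 0 := by
      have := add_eq_left.mp h'
      exact this
    have hK : DA ⊗ₖ DB = 0 := by
      rcases smul_eq_zero.mp hzero with h | h
      · exact absurd h (by exact_mod_cast hε.ne')
      · exact h
    have hKe : ∀ (i j : Fin m) (k l : Fin n), DA i j * DB k l = 0 := by
      intro i j k l
      have := congrFun (congrFun hK (i, k)) (j, l)
      simpa [kroneckerMap_apply] using this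
    have hDBne : ∃ k l, DB k l ≠ 0 := by
      by_contra hcon
      push_neg at hcon
      have : DB = 0 := by ext k l; simpa using hcon k l
      rw [this] at hqB
      simp at hqB
    obtain ⟨k, l, hkl⟩ := hDBne
    have hDAz : DA = 0 := by
      ext i j
      have := hKe i j k l
      simpa using (mul_eq_zero.mp this).resolve_right hkl
    rw [hDAz] at hqA
    simp at hqA
  exact ⟨σ, ⟨hσpsd, hσtr⟩, htrBσ, htrAσ, hneq⟩
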